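/- Suppose a channel Φ with Kraus operators {Vᵢ} privatizes a subspace with projection P to an output state ρ₀ proportional to a projection Q (ρ₀ = Q / rank(Q)). Then there exist scalars u_{ikl} such that for all i, Vᵢ P = Σ_{k,l} u_{ikl} A_{kl}, where A_{kl} = (1/√rank(Q)) |ψₖ⟩⟨φₗ|, with Q = Σₖ |ψₖ⟩⟨ψₖ| and P = Σₗ |φₗ⟩⟨φₗ|. -/

import Mathlib

open Matrix ComplexOrder

private lemma vmv_mulVec {s t : ℕ} (a : Fin s → ℂ) (b : Fin t → ℂ) (x : Fin t → ℂ) :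
    vecMulVec a b *ᵥ x = (b ⬝ᵥ x) • a := by
  ext i
  simp [vecMulVec_apply, mulVec, dotProduct, Finset.mul_sum, mul_assoc, mul_comm, mul_left_comm]

private lemma mul_vmv {s t : ℕ} (M : Matrix (Fin s) (Fin s) ℂ) (a : Fin s → ℂ) (b : Fin t → ℂ) :
    M * vecMulVec a b = vecMulVec (M *ᵥ a) b := by
  ext i j
  simp [mul_apply, vecMulVec_apply, mulVec, dotProduct, Finset.sum_mul, mul_assoc]

private lemma vmv_mul {s t : ℕ} (a : Fin s → ℂ) (b : Fin t → ℂ) (M : Matrix (Fin t) (Fin t) ℂ) :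
    vecMulVec a b * M = vecMulVec a (b ᵥ* M) := by
  ext i j
  simp [mul_apply, vecMulVec_apply, vecMul, dotProduct, Finset.mul_sum, mul_assoc]

private lemma vmv_mul_vmv {s t u : ℕ} (a : Fin s → ℂ) (b c : Fin t → ℂ) (d : Fin u → ℂ) :
    vecMulVec a b * vecMulVec c d = (b ⬝ᵥ c) • vecMulVec a d := by
  ext i j
  simp only [mul_apply, vecMulVec_apply, Matrix.smul_apply, smul_eq_mul, dotProduct, Finset.sum_mul]
  exact Finset.sum_congr rfl fun x _ => by ring

private lemma vmv_ct {s t : ℕ} (a : Fin s → ℂ) (b : Fin t → ℂ) :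
    (vecMulVec a b)ᴴ = vecMulVec (star b) (star a) := by
  ext i j
  simp [vecMulVec_apply, conjTranspose_apply, mul_comm]

private lemma vmv_trace {s : ℕ} (a b : Fin s → ℂ) : (vecMulVec a b).trace = b ⬝ᵥ a := by
  simp [trace, vecMulVec_apply, dotProduct, diag, mul_comm]

private lemma star_dp {s : ℕ} (a b : Fin s → ℂ) : star (star a ⬝ᵥ b) = star b ⬝ᵥ a := by
  simp [dotProduct, mul_comm]

private lemma vmv_sum_left {s t n : ℕ} (c : Fin n → ℂ) (a : Fin n → Fin s → ℂ)
    (b : Fin t → ℂ) :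
    vecMulVec (∑ k, c k • a k) b = ∑ k, c k • vecMulVec (a k) b := by
  ext i j
  simp only [vecMulVec_apply, Finset.sum_apply, Pi.smul_apply, Matrix.sum_apply,
    Matrix.smul_apply, smul_eq_mul, Finset.sum_mul]
  exact Finset.sum_congr rfl fun x _ => by ring

private lemma sum_mulVec' {s n : ℕ} (A : Fin n → Matrix (Fin s) (Fin s) ℂ) (x : Fin s → ℂ) :
    (∑ j, A j) *ᵥ x = ∑ j, A j *ᵥ x := by
  ext i
  simp only [mulVec, dotProduct, Matrix.sum_apply, Finset.sum_apply, Finset.sum_mul]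
  rw [Finset.sum_comm]

private lemma dotProduct_sum' {s n : ℕ} (v : Fin s → ℂ) (w : Fin n → Fin s → ℂ) :
    v ⬝ᵥ (∑ j, w j) = ∑ j, v ⬝ᵥ w j := by
  simp only [dotProduct, Finset.sum_apply, Finset.mul_sum]
  rw [Finset.sum_comm]

theorem private_to_projection_kraus_span
    {s r rQ rP : ℕ} (hrQ : 0 < rQ)
    (V : Fin r → Matrix (Fin s) (Fin s) ℂ)
    (hV : ∑ i, (V i)ᴴ * V i = 1)
    (ψ : Fin rQ → (Fin s → ℂ))
    (hψ : ∀ k k', star (ψ k) ⬝ᵥ ψ k' = if k = k' then 1 else 0)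
    (φ : Fin rP → (Fin s → ℂ))
    (hφ : ∀ l l', star (φ l) ⬝ᵥ φ l' = if l = l' then 1 else 0)
    (Q P : Matrix (Fin s) (Fin s) ℂ)
    (hQ : Q = ∑ k, vecMulVec (ψ k) (star (ψ k)))
    (hPdef : P = ∑ l, vecMulVec (φ l) (star (φ l)))
    (ρ₀ : Matrix (Fin s) (Fin s) ℂ) (hρ₀ : ρ₀ = ((rQ : ℂ))⁻¹ • Q)
    (hpriv : ∀ σ : Matrix (Fin s) (Fin s) ℂ,
      σ.PosSemidef → σ.trace = 1 → P * σ * P = σ →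
      ∑ i, V i * σ * (V i)ᴴ = ρ₀) :
    ∃ u : Fin r → Fin rQ → Fin rP → ℂ,
      ∀ i, V i * P = ∑ k, ∑ l, u i k l •
        (((Real.sqrt rQ : ℂ))⁻¹ • vecMulVec (ψ k) (star (φ l))) := by
  have hQherm : Qᴴ = Q := by
    rw [hQ, conjTranspose_sum]
    exact Finset.sum_congr rfl fun k _ => by rw [vmv_ct, star_star]
  have hPherm : Pᴴ = P := by
    rw [hPdef, conjTranspose_sum]
    exact Finset.sum_congr rfl fun l _ => by rw [vmv_ct, star_star]
  have hPφ : ∀ l, P *ᵥ φ l = φ l := by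
    intro l
    rw [hPdef, sum_mulVec']
    simp only [vmv_mulVec, hφ]
    simp
  have hQQ : Q * Q = Q := by
    rw [hQ, Finset.sum_mul_sum]
    simp only [vmv_mul_vmv, hψ]
    simp [ite_smul]
  -- privatization applied to the pure states |φ l⟩⟨φ l|
  have key : ∀ l, ∑ i, vecMulVec (V i *ᵥ φ l) (star (V i *ᵥ φ l)) = ((rQ : ℂ))⁻¹ • Q := by
    intro l
    have hps : (vecMulVec (φ l) (star (φ l))).PosSemidef := by
      apply PosSemidef.of_dotProduct_mulVec_nonneg
      · show _ᴴ = _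
        rw [vmv_ct, star_star]
      · intro x
        rw [vmv_mulVec, dotProduct_smul]
        have h1 : star (φ l) ⬝ᵥ x = star (star x ⬝ᵥ φ l) := (star_dp x (φ l)).symm
        rw [h1, smul_eq_mul]
        exact star_mul_self_nonneg _
    have htr : (vecMulVec (φ l) (star (φ l))).trace = 1 := by
      rw [vmv_trace, hφ]; simp
    have hPσP : P * vecMulVec (φ l) (star (φ l)) * P = vecMulVec (φ l) (star (φ l)) := by
      rw [mul_vmv, vmv_mul, hPφ, ← hPherm, ← star_mulVec, hPφ]
    have h := hpriv _ hps htr hPσP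
    rw [hρ₀] at h
    rw [← h]
    refine Finset.sum_congr rfl fun i _ => ?_
    rw [mul_vmv, vmv_mul, ← star_mulVec]
  -- vectors in the range of the output must lie in the range of Q
  have hinQ : ∀ (w : Fin r → Fin s → ℂ),
      (∑ j, vecMulVec (w j) (star (w j)) = ((rQ : ℂ))⁻¹ • Q) → ∀ i, w i = Q *ᵥ w i := by
    intro w hE i
    have hQz : Q *ᵥ (w i - Q *ᵥ w i) = 0 := by
      rw [mulVec_sub, mulVec_mulVec, hQQ, sub_self]
    have hzQ : star (w i - Q *ᵥ w i) ᵥ* Q = 0 := by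
      have h2 := star_mulVec Q (w i - Q *ᵥ w i)
      rw [hQherm] at h2
      rw [← h2, hQz]
      simp
    have hq := congrArg (fun M => star (w i - Q *ᵥ w i) ⬝ᵥ (M *ᵥ (w i - Q *ᵥ w i))) hE
    simp only [sum_mulVec', dotProduct_sum', vmv_mulVec, dotProduct_smul,
      smul_mulVec, smul_eq_mul, hQz, dotProduct_zero, mul_zero] at hq
    have hterm : star (w i - Q *ᵥ w i) ⬝ᵥ w i = 0 := by
      have hnn : ∀ j ∈ Finset.univ, (0:ℂ) ≤
          (star (w j) ⬝ᵥ (w i - Q *ᵥ w i)) * (star (w i - Q *ᵥ w i) ⬝ᵥ w j) := by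
        intro j _
        have h1 : star (w j) ⬝ᵥ (w i - Q *ᵥ w i)
            = star (star (w i - Q *ᵥ w i) ⬝ᵥ w j) := (star_dp _ _).symm
        rw [h1]
        exact star_mul_self_nonneg _
      have := (Finset.sum_eq_zero_iff_of_nonneg hnn).mp hq i (Finset.mem_univ i)
      rcases mul_eq_zero.mp this with h0 | h0
      · have h1 : star (star (w i - Q *ᵥ w i) ⬝ᵥ w i) = 0 := by rw [star_dp]; exact h0
        simpa using congrArg star h1
      · exact h0
    have hz0 : w i - Q *ᵥ w i = 0 := by
      rw [← dotProduct_star_self_eq_zero (v := w i - Q *ᵥ w i)]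
      rw [dotProduct_sub, hterm, dotProduct_mulVec, hzQ]
      simp
    exact (sub_eq_zero.mp hz0)
  have hspan : ∀ i l, V i *ᵥ φ l = ∑ k, (star (ψ k) ⬝ᵥ (V i *ᵥ φ l)) • ψ k := by
    intro i l
    have h1 := hinQ (fun j => V j *ᵥ φ l) (key l) i
    calc V i *ᵥ φ l = Q *ᵥ (V i *ᵥ φ l) := h1
      _ = ∑ k, (star (ψ k) ⬝ᵥ (V i *ᵥ φ l)) • ψ k := by
          rw [hQ, sum_mulVec']
          exact Finset.sum_congr rfl fun k _ => vmv_mulVec _ _ _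
  -- assemble
  refine ⟨fun i k l => (Real.sqrt rQ : ℂ) * (star (ψ k) ⬝ᵥ (V i *ᵥ φ l)), fun i => ?_⟩
  have hsq : ((Real.sqrt rQ : ℂ)) ≠ 0 := by
    have : (0:ℝ) < Real.sqrt rQ := Real.sqrt_pos.mpr (by exact_mod_cast hrQ)
    exact_mod_cast this.ne'
  have hred : ∀ k l, ((Real.sqrt rQ : ℂ) * (star (ψ k) ⬝ᵥ (V i *ᵥ φ l))) •
      (((Real.sqrt rQ : ℂ))⁻¹ • vecMulVec (ψ k) (star (φ l)))
      = (star (ψ k) ⬝ᵥ (V i *ᵥ φ l)) • vecMulVec (ψ k) (star (φ l)) := by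
    intro k l
    rw [smul_smul, mul_comm ((Real.sqrt rQ : ℂ)), mul_assoc,
      mul_inv_cancel₀ hsq, mul_one]
  simp only [hred]
  rw [hPdef, Finset.mul_sum, Finset.sum_comm]
  refine Finset.sum_congr rfl fun l _ => ?_
  rw [mul_vmv]
  conv_lhs => rw [hspan i l]
  rw [vmv_sum_left]
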